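/- If π₁ = {B_j | j ∈ J} and π₂ = {A_i | i ∈ I} are decompositions in a closure system (V, Q) and π₁ is covered by π₂ in D(V, Q), then there is a unique index k ∈ I and a subset J_k ⊆ J with at least two elements such that A_k = ⋃_{j∈J_k} B_j, and A_i is a block of π₁ for all i ≠ k. -/
import Mathlib


variable {V : Type*}

/-- `Q` is a closure system on `V`: it contains `V` and is closed under
intersections of nonempty subfamilies. -/
def IsClosureSystem (Q : Set (Set V)) : Prop :=
  Set.univ ∈ Q ∧ ∀ F ⊆ Q, F.Nonempty → ⋂₀ F ∈ Q

/-- Algebraic: the union of any nonempty chain of closed sets is closed. -/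
def IsAlgebraicSystem (Q : Set (Set V)) : Prop :=
  ∀ C ⊆ Q, C.Nonempty → IsChain (· ⊆ ·) C → ⋃₀ C ∈ Q

/-- Condition (I₀): the empty set and all singletons are closed. -/
def CondI0 (Q : Set (Set V)) : Prop := ∅ ∈ Q ∧ ∀ x : V, {x} ∈ Q

/-- Condition (I₁): the union of two intersecting members is a member. -/
def CondI1 (Q : Set (Set V)) : Prop :=
  ∀ A ∈ Q, ∀ B ∈ Q, (A ∩ B).Nonempty → A ∪ B ∈ Q

/-- Condition (I₂): differences of properly overlapping members are members. -/
def CondI2 (Q : Set (Set V)) : Prop :=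
  ∀ A ∈ Q, ∀ B ∈ Q, (A ∩ B).Nonempty → ¬ A ⊆ B → ¬ B ⊆ A → A \ B ∈ Q ∧ B \ A ∈ Q

/-- An interval system: an algebraic closure system satisfying (I₀), (I₁), (I₂). -/
def IsIntervalSystem (Q : Set (Set V)) : Prop :=
  IsClosureSystem Q ∧ IsAlgebraicSystem Q ∧ CondI0 Q ∧ CondI1 Q ∧ CondI2 Q

/-- `A` is a strong set of the closure system `Q`. -/
def IsStrong (Q : Set (Set V)) (A : Set V) : Prop :=
  A ∈ Q ∧ ∀ B ∈ Q, (A ∩ B).Nonempty → A ⊆ B ∨ B ⊆ A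

/-- A decomposition: a partition of `V` (coded as a setoid) all of whose
blocks belong to `Q`.  The refinement order on partitions corresponds to the
order on `Setoid V` (finer below). -/
def IsDecomp (Q : Set (Set V)) (π : Setoid V) : Prop :=
  ∀ x : V, {y | π.r x y} ∈ Q

/-- The lattice `D(V,Q)` of decompositions, as a subtype of `Setoid V`
with the induced (refinement) partial order. -/
abbrev Decomp (Q : Set (Set V)) := {π : Setoid V // IsDecomp Q π}

/-- Covering lemma: if `π₁ ≺ π₂` in `D(V,Q)` then exactly one block `A` of
`π₂` is not a block of `π₁`; it is the union of at least two blocks of `π₁`,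
and every other block of `π₂` is a block of `π₁`. -/

private lemma badpair (π₁ π₂ : Setoid V) (hle : ∀ x y, π₁.r x y → π₂.r x y)
    {A : Set V} (hA : A ∈ π₂.classes) (hA1 : A ∉ π₁.classes) :
    ∃ x ∈ A, ∃ y ∈ A, ¬ π₁.r x y := by
  by_contra h
  push_neg at h
  obtain ⟨c, rfl⟩ := hA
  refine hA1 ⟨c, ?_⟩
  ext z
  constructor
  · intro hz
    exact h z hz c (π₂.refl c)
  · intro hz
    exact hle _ _ hz

theorem stmt8 (Q : Set (Set V)) (hC : IsClosureSystem Q)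
    (π₁ π₂ : Setoid V) (h₁ : IsDecomp Q π₁) (h₂ : IsDecomp Q π₂)
    (hlt : π₁ < π₂)
    (hcov : ¬ ∃ σ : Setoid V, IsDecomp Q σ ∧ π₁ < σ ∧ σ < π₂) :
    ∃ A ∈ π₂.classes,
      (∃ J ⊆ π₁.classes, J.Nontrivial ∧ A = ⋃₀ J) ∧
      (∀ B ∈ π₂.classes, B ≠ A → B ∈ π₁.classes) ∧
      (∀ A' ∈ π₂.classes, A' ∉ π₁.classes → A' = A) := by
  classical
  have hle : ∀ x y, π₁.r x y → π₂.r x y := fun x y h => (le_of_lt hlt) h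
  -- existence of a pair related in π₂ but not π₁
  obtain ⟨a, b, hab2, hab1⟩ : ∃ a b, π₂.r a b ∧ ¬ π₁.r a b := by
    by_contra h
    push_neg at h
    exact absurd (le_antisymm (le_of_lt hlt) (fun x y hxy => h x y hxy)) (ne_of_lt hlt)
  set A : Set V := {x | π₂.r x a} with hAdef
  have hA2 : A ∈ π₂.classes := π₂.mem_classes a
  have haA : a ∈ A := π₂.refl a
  have hbA : b ∈ A := π₂.symm hab2
  have hA1 : A ∉ π₁.classes := by
    rintro ⟨c, hc⟩
    have h1 : π₁.r a c := by rw [Set.ext_iff] at hc; exact (hc a).mp haA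
    have h2 : π₁.r b c := by rw [Set.ext_iff] at hc; exact (hc b).mp hbA
    exact hab1 (π₁.trans h1 (π₁.symm h2))
  have hAclosed : ∀ x ∈ A, ∀ y, π₁.r x y → y ∈ A := by
    intro x hx y hxy
    exact π₂.trans (π₂.symm (hle _ _ hxy)) hx
  -- the key uniqueness step
  have key : ∀ A' ∈ π₂.classes, A' ∉ π₁.classes → A' = A := by
    intro A' hA'2 hA'1
    by_contra hne
    obtain ⟨x', hx'A, y', hy'A, hxy'⟩ := badpair π₁ π₂ hle hA'2 hA'1
    have hdisj : ∀ z, z ∈ A' → z ∉ A := by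
      intro z hz hzA
      exact hne (Setoid.eq_of_mem_classes hA'2 hz hA2 hzA)
    -- build the intermediate decomposition σ
    refine hcov ⟨⟨fun x y => (x ∈ A ∧ y ∈ A) ∨ π₁.r x y,
      fun x => Or.inr (π₁.refl x),
      fun h => h.elim (fun ⟨hx, hy⟩ => Or.inl ⟨hy, hx⟩) (fun h => Or.inr (π₁.symm h)),
      fun {x y z} hxy hyz => by
        rcases hxy with ⟨hx, hy⟩ | hxy
        · rcases hyz with ⟨_, hz⟩ | hyz
          · exact Or.inl ⟨hx, hz⟩
          · exact Or.inl ⟨hx, hAclosed y hy z hyz⟩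
        · rcases hyz with ⟨hy, hz⟩ | hyz
          · exact Or.inl ⟨hAclosed y hy x (π₁.symm hxy), hz⟩
          · exact Or.inr (π₁.trans hxy hyz)⟩, ?_, ?_, ?_⟩
    · -- IsDecomp
      intro x
      by_cases hx : x ∈ A
      · have : {y | (x ∈ A ∧ y ∈ A) ∨ π₁.r x y} = A := by
          ext y
          constructor
          · rintro (⟨_, hy⟩ | hxy)
            · exact hy
            · exact hAclosed x hx y hxy
          · intro hy; exact Or.inl ⟨hx, hy⟩
        show {y | (x ∈ A ∧ y ∈ A) ∨ π₁.r x y} ∈ Q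
        rw [this]
        have : A = {y | π₂.r a y} := by ext y; exact ⟨fun h => π₂.symm h, fun h => π₂.symm h⟩
        rw [this]
        exact h₂ a
      · have : {y | (x ∈ A ∧ y ∈ A) ∨ π₁.r x y} = {y | π₁.r x y} := by
          ext y
          constructor
          · rintro (⟨hx', _⟩ | hxy)
            · exact absurd hx' hx
            · exact hxy
          · intro hy; exact Or.inr hy
        show {y | (x ∈ A ∧ y ∈ A) ∨ π₁.r x y} ∈ Q
        rw [this]
        exact h₁ x
    · -- π₁ < σ
      refine lt_of_le_of_ne (fun x y h => Or.inr h) ?_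
      intro he
      obtain ⟨u, huA, v, hvA, huv⟩ := badpair π₁ π₂ hle hA2 hA1
      have : π₁.r u v := by rw [he]; exact Or.inl ⟨huA, hvA⟩
      exact huv this
    · -- σ < π₂
      refine lt_of_le_of_ne ?_ ?_
      · intro x y h
        rcases h with ⟨hx, hy⟩ | h
        · exact π₂.trans hx (π₂.symm hy)
        · exact hle _ _ h
      · intro he
        have h2 : π₂.r x' y' := by
          obtain ⟨c, hc⟩ := hA'2
          rw [Set.ext_iff] at hc
          exact π₂.trans ((hc x').mp hx'A) (π₂.symm ((hc y').mp hy'A))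
        have : ∀ σ : Setoid V, σ = π₂ → σ.r x' y' := fun σ h => h ▸ h2
        have := this _ he
        rcases this with ⟨hx, _⟩ | h
        · exact hdisj x' hx'A hx
        · exact hxy' h
  refine ⟨A, hA2, ?_, ?_, key⟩
  · -- A is the union of ≥ 2 blocks of π₁
    refine ⟨{B | B ∈ π₁.classes ∧ B ⊆ A}, fun B hB => hB.1, ?_, ?_⟩
    · obtain ⟨u, huA, v, hvA, huv⟩ := badpair π₁ π₂ hle hA2 hA1
      refine ⟨{z | π₁.r z u}, ⟨π₁.mem_classes u, fun z hz => hAclosed u huA z (π₁.symm hz)⟩,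
        {z | π₁.r z v}, ⟨π₁.mem_classes v, fun z hz => hAclosed v hvA z (π₁.symm hz)⟩, ?_⟩
      intro he
      have : v ∈ {z | π₁.r z u} := by rw [he]; exact π₁.refl v
      exact huv (π₁.symm this)
    · ext x
      constructor
      · intro hx
        exact ⟨{z | π₁.r z x}, ⟨π₁.mem_classes x, fun z hz => hAclosed x hx z (π₁.symm hz)⟩,
          π₁.refl x⟩
      · rintro ⟨B, ⟨_, hBA⟩, hxB⟩
        exact hBA hxB
  · intro B hB2 hBA
    by_contra hB1
    exact hBA (key B hB2 hB1)
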